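/- arXiv:math/0312118 — 2 statements merged into one kernel-verified Lean document; each statement's English description precedes it below -/
import Mathlib

section
/- Let A be a unital *-algebra over C = R(i), ω a positive linear functional with Gelfand ideal J_ω = {a : ω(a*a)=0}. Then on the quotient H_ω = A/J_ω the formula ⟨[a],[b]⟩ := ω(a*b) defines a well-defined positive-definite sesquilinear inner product, and π_ω(a)[b] := [ab] defines a *-representation of A on the pre-Hilbert space H_ω (the GNS construction). -/
/-- The ring `C = R(i)` obtained from an ordered ring `R` by adjoining `i` with `i² = -1`. -/
@[ext]
structure Cx (R : Type*) where
  re : R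
  im : R

namespace Cx

variable {R : Type*} [CommRing R] [LinearOrder R] [IsStrictOrderedRing R]

instance : Zero (Cx R) := ⟨⟨0, 0⟩⟩
instance : One (Cx R) := ⟨⟨1, 0⟩⟩
instance : Add (Cx R) := ⟨fun z w => ⟨z.re + w.re, z.im + w.im⟩⟩
instance : Neg (Cx R) := ⟨fun z => ⟨-z.re, -z.im⟩⟩
instance : Mul (Cx R) :=
  ⟨fun z w => ⟨z.re * w.re - z.im * w.im, z.re * w.im + z.im * w.re⟩⟩

@[simp] lemma zero_re : (0 : Cx R).re = 0 := rfl
@[simp] lemma zero_im : (0 : Cx R).im = 0 := rfl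
@[simp] lemma one_re : (1 : Cx R).re = 1 := rfl
@[simp] lemma one_im : (1 : Cx R).im = 0 := rfl
@[simp] lemma add_re (z w : Cx R) : (z + w).re = z.re + w.re := rfl
@[simp] lemma add_im (z w : Cx R) : (z + w).im = z.im + w.im := rfl
@[simp] lemma neg_re (z : Cx R) : (-z).re = -z.re := rfl
@[simp] lemma neg_im (z : Cx R) : (-z).im = -z.im := rfl
@[simp] lemma mul_re (z w : Cx R) : (z * w).re = z.re * w.re - z.im * w.im := rfl
@[simp] lemma mul_im (z w : Cx R) : (z * w).im = z.re * w.im + z.im * w.re := rfl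

instance : CommRing (Cx R) where
  add := (· + ·)
  add_assoc a b c := by ext <;> simp <;> ring
  zero := 0
  zero_add a := by ext <;> simp
  add_zero a := by ext <;> simp
  add_comm a b := by ext <;> simp <;> ring
  neg := Neg.neg
  neg_add_cancel a := by ext <;> simp
  mul := (· * ·)
  mul_assoc a b c := by ext <;> simp <;> ring
  one := 1
  one_mul a := by ext <;> simp
  mul_one a := by ext <;> simp
  left_distrib a b c := by ext <;> simp <;> ring
  right_distrib a b c := by ext <;> simp <;> ring
  zero_mul a := by ext <;> simp
  mul_zero a := by ext <;> simp
  mul_comm a b := by ext <;> simp <;> ring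
  nsmul := nsmulRec
  zsmul := zsmulRec

/-- Conjugation `a + i b ↦ a - i b` as the star operation on `C = R(i)`. -/
instance : StarRing (Cx R) where
  star z := ⟨z.re, -z.im⟩
  star_involutive z := by ext <;> simp
  star_mul z w := by ext <;> simp <;> ring
  star_add z w := by ext <;> simp <;> ring

@[simp] lemma star_re (z : Cx R) : (star z).re = z.re := rfl
@[simp] lemma star_im (z : Cx R) : (star z).im = -z.im := rfl

/-- The canonical embedding `R → R(i)`. -/
def ofR : R →+* Cx R where
  toFun r := ⟨r, 0⟩
  map_one' := rfl
  map_mul' r s := by ext <;> simp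
  map_zero' := rfl
  map_add' r s := by ext <;> simp

instance : Algebra R (Cx R) := (ofR : R →+* Cx R).toAlgebra

/-- `i ∈ R(i)`. -/
def I : Cx R := ⟨0, 1⟩

lemma I_mul_I : (I : Cx R) * I = -1 := by ext <;> simp [I]

/-- Positivity in `C = R(i)`: a real element with positive real part. -/
def pos (z : Cx R) : Prop := 0 < z.re ∧ z.im = 0

/-- Nonnegativity in `C = R(i)`: a real element with nonnegative real part. -/
def nonneg (z : Cx R) : Prop := 0 ≤ z.re ∧ z.im = 0

end Cx

section StarAlgebra

/- `A` is a `*`-algebra over `C = R(i)`: an associative `C`-algebra with a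
`C`-antilinear involution (`star (c • a) = star c • star a`). -/
variable {R : Type*} [CommRing R] [LinearOrder R] [IsStrictOrderedRing R]
variable {A : Type*} [Ring A] [StarRing A] [Algebra (Cx R) A] [StarModule (Cx R) A]

/-- A `C`-linear functional `ω : A → C` is *positive* if `ω(a* a) ≥ 0` for all `a`. -/
def IsPositiveFunctional (ω : A →ₗ[Cx R] Cx R) : Prop :=
  ∀ a : A, (ω (star a * a)).nonneg


namespace GNSAux

variable {R : Type*} [CommRing R] [LinearOrder R] [IsStrictOrderedRing R]

lemma cx_eq_zero {w : Cx R} (h : w.re * w.re + w.im * w.im = 0) : w = 0 := by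
  have h1 : w.re = 0 := by
    have a1 := mul_self_nonneg w.re
    have a2 := mul_self_nonneg w.im
    have : w.re * w.re = 0 := by linarith
    exact mul_self_eq_zero.mp this
  have h2 : w.im = 0 := by
    have a1 := mul_self_nonneg w.re
    have a2 := mul_self_nonneg w.im
    have : w.im * w.im = 0 := by linarith
    exact mul_self_eq_zero.mp this
  ext <;> simp [h1, h2]

variable {A : Type*} [Ring A] [StarRing A] [Algebra (Cx R) A] [StarModule (Cx R) A]
variable (ω : A →ₗ[Cx R] Cx R)

lemma expand (c d : Cx R) (x a : A) :
    ω (star (c • x + d • a) * (c • x + d • a)) =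
      star c * c * ω (star x * x) + star c * d * ω (star x * a)
        + star d * c * ω (star a * x) + star d * d * ω (star a * a) := by
  rw [star_add, star_smul, star_smul, add_mul, mul_add, mul_add]
  simp only [smul_mul_assoc, mul_smul_comm, map_add, map_smul, smul_eq_mul, smul_smul]
  ring

lemma herm (hω : IsPositiveFunctional ω) (a b : A) :
    ω (star a * b) = star (ω (star b * a)) := by
  have h1 := (hω ((1 : Cx R) • a + (1 : Cx R) • b)).2
  rw [expand] at h1
  have h2 := (hω ((1 : Cx R) • a + (Cx.I : Cx R) • b)).2
  rw [expand] at h2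
  have ha := (hω a).2
  have hb := (hω b).2
  have hsI : (star Cx.I : Cx R) = -Cx.I := by ext <;> simp [Cx.I]
  rw [hsI] at h2
  have hIre : (Cx.I : Cx R).re = 0 := rfl
  have hIim : (Cx.I : Cx R).im = 1 := rfl
  set p := ω (star a * b) with hp
  set q := ω (star b * a) with hq
  simp only [star_one, one_mul, mul_one, Cx.add_im, Cx.add_re, Cx.mul_im, Cx.mul_re,
    Cx.neg_re, Cx.neg_im, hIre, hIim, Cx.one_re, Cx.one_im] at h1 h2
  ring_nf at h2
  ext
  · simp only [Cx.star_re]; linarith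
  · simp only [Cx.star_im]; linarith

lemma deg (hω : IsPositiveFunctional ω) {a : A} (ha : ω (star a * a) = 0) (x : A) :
    ω (star x * a) = 0 := by
  set z := ω (star x * a) with hz
  have hax : ω (star a * x) = star z := by rw [herm ω hω]
  have hr := hω x
  set r := ω (star x * x) with hrdef
  set n : R := z.re * z.re + z.im * z.im with hn
  have hnng : 0 ≤ n := by
    rw [hn]
    have := mul_self_nonneg z.re
    have := mul_self_nonneg z.im
    linarith
  -- first instantiation : c = z, d = ofR (-r.re)
  have h1 := (hω (z • x + (Cx.ofR (-(r.re))) • a)).1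
  rw [expand, ha, hax] at h1
  have key : r.re * n = 0 := by
    have him : r.im = 0 := hr.2
    have hcalc : (star z * z * r + star z * Cx.ofR (-r.re) * z +
        star (Cx.ofR (-r.re)) * z * star z + star (Cx.ofR (-r.re)) * Cx.ofR (-r.re)
          * (0 : Cx R)).re
        = n * r.re - 2 * r.re * n := by
      simp [Cx.ofR, hn, him]
      ring
    rw [← hrdef] at h1
    rw [hcalc] at h1
    nlinarith [hr.1]
  rcases mul_eq_zero.mp key with hre | hn0
  · -- r.re = 0, so r = 0 ; instantiate c = 1, d = -(star z)
    have hr0 : r = 0 := by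
      ext
      · exact hre
      · exact hr.2
    have h2 := (hω ((1 : Cx R) • x + (-(star z)) • a)).1
    rw [expand, ha, hax, ← hrdef, hr0] at h2
    have hcalc2 : (star (1 : Cx R) * 1 * 0 + star (1 : Cx R) * -star z * z +
        star (-star z) * 1 * star z + star (-star z) * -star z * (0 : Cx R)).re
          = -(2 * n) := by
      simp [hn]
      ring
    rw [hcalc2] at h2
    have hn0 : n = 0 := by linarith
    exact cx_eq_zero (by rw [← hn]; exact hn0)
  · exact cx_eq_zero (by rw [← hn]; exact hn0)

lemma deg' (hω : IsPositiveFunctional ω) {a : A} (ha : ω (star a * a) = 0) (x : A) :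
    ω (star a * x) = 0 := by
  rw [herm ω hω, deg ω hω ha x]
  ext <;> simp

/-- The Gelfand ideal as a submodule. -/
def gnsIdeal (hω : IsPositiveFunctional ω) : Submodule (Cx R) A where
  carrier := {a | ω (star a * a) = 0}
  zero_mem' := by simp
  add_mem' := by
    intro a b ha hb
    have h : ω (star ((1 : Cx R) • a + (1 : Cx R) • b) * ((1 : Cx R) • a + (1 : Cx R) • b))
        = 0 := by
      rw [expand, ha, hb, deg ω hω hb a, deg ω hω ha b]
      simp
    simpa using h
  smul_mem' := by
    intro c a ha
    have h : ω (star (c • a) * (c • a)) = star c * c * ω (star a * a) := by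
      rw [star_smul, smul_mul_assoc, mul_smul_comm, map_smul, map_smul,
        smul_eq_mul, smul_eq_mul, mul_assoc]
    simp only [Set.mem_setOf_eq] at ha ⊢
    rw [h, ha, mul_zero]

lemma mem_gnsIdeal (hω : IsPositiveFunctional ω) (a : A) :
    a ∈ gnsIdeal ω hω ↔ ω (star a * a) = 0 := Iff.rfl

lemma gnsIdeal_mul_mem (hω : IsPositiveFunctional ω) (a : A) {b : A}
    (hb : b ∈ gnsIdeal ω hω) : a * b ∈ gnsIdeal ω hω := by
  rw [mem_gnsIdeal] at hb ⊢
  have h1 : star (a * b) * (a * b) = star b * (star a * (a * b)) := by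
    rw [star_mul, mul_assoc]
  rw [h1]
  exact deg' ω hω hb _

/-- The GNS inner product on the quotient. -/
def gnsIP (hω : IsPositiveFunctional ω) :
    (A ⧸ gnsIdeal ω hω) → (A ⧸ gnsIdeal ω hω) → Cx R := fun x y =>
  Quotient.liftOn₂' x y (fun a b => ω (star a * b)) (by
    intro a₁ b₁ a₂ b₂ h₁ h₂
    have ha : a₁ - a₂ ∈ gnsIdeal ω hω := (Submodule.quotientRel_def _).mp h₁
    have hb : b₁ - b₂ ∈ gnsIdeal ω hω := (Submodule.quotientRel_def _).mp h₂
    have e1 : ω (star (a₁ - a₂) * b₁) = 0 := deg' ω hω ha b₁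
    have e2 : ω (star a₂ * (b₁ - b₂)) = 0 := deg ω hω hb a₂
    have expand1 : ω (star a₁ * b₁) - ω (star a₂ * b₁)
        = ω (star (a₁ - a₂) * b₁) := by
      rw [star_sub, sub_mul, map_sub]
    have expand2 : ω (star a₂ * b₁) - ω (star a₂ * b₂)
        = ω (star a₂ * (b₁ - b₂)) := by
      rw [mul_sub, map_sub]
    have h : ω (star a₁ * b₁) - ω (star a₂ * b₂) = 0 := by
      rw [show ω (star a₁ * b₁) - ω (star a₂ * b₂)
        = (ω (star a₁ * b₁) - ω (star a₂ * b₁)) + (ω (star a₂ * b₁) - ω (star a₂ * b₂)) by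
          ring,
        expand1, expand2, e1, e2, add_zero]
    exact sub_eq_zero.mp h)

lemma gnsIP_mk (hω : IsPositiveFunctional ω) (a b : A) :
    gnsIP ω hω (Submodule.Quotient.mk a) (Submodule.Quotient.mk b) = ω (star a * b) := rfl

/-- The GNS representation. -/
def gnsRep (hω : IsPositiveFunctional ω) (a : A) :
    (A ⧸ gnsIdeal ω hω) →ₗ[Cx R] (A ⧸ gnsIdeal ω hω) :=
  Submodule.mapQ _ _ (LinearMap.mulLeft (Cx R) a)
    (fun b hb => gnsIdeal_mul_mem ω hω a hb)

lemma gnsRep_mk (hω : IsPositiveFunctional ω) (a b : A) :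
    gnsRep ω hω a (Submodule.Quotient.mk b) = Submodule.Quotient.mk (a * b) := by
  rfl

end GNSAux

/-- GNS construction. Let `A` be a unital `*`-algebra over
`C = R(i)` and `ω` a positive linear functional with Gelfand ideal
`J_ω = {a | ω(a* a) = 0}` (a `C`-submodule). On `H_ω = A / J_ω` the formula
`⟨[a],[b]⟩ := ω(a* b)` is a well-defined positive-definite sesquilinear inner
product, and `π(a)[b] := [a b]` is a well-defined unital `*`-representation of `A`
on the pre-Hilbert space `H_ω`, i.e. each `π(a)` is linear and adjointable with
`π(a)* = π(a*)`, and `π` is multiplicative, linear and unital. -/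
theorem gns_construction
    (ω : A →ₗ[Cx R] Cx R) (hω : IsPositiveFunctional ω) :
    ∃ J : Submodule (Cx R) A, (∀ a : A, a ∈ J ↔ ω (star a * a) = 0) ∧
    ∃ ip : (A ⧸ J) → (A ⧸ J) → Cx R,
      -- well-definedness of `⟨[a],[b]⟩ = ω(a* b)`
      (∀ a b : A, ip (Submodule.Quotient.mk a) (Submodule.Quotient.mk b)
          = ω (star a * b)) ∧
      -- sesquilinearity (linear in the second argument), Hermitian symmetry,
      -- positive definiteness
      (∀ x y z : A ⧸ J, ip x (y + z) = ip x y + ip x z) ∧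
      (∀ (c : Cx R) (x y : A ⧸ J), ip x (c • y) = c * ip x y) ∧
      (∀ x y : A ⧸ J, ip x y = star (ip y x)) ∧
      (∀ x : A ⧸ J, x ≠ 0 → (ip x x).pos) ∧
    ∃ π : A → (A ⧸ J) → (A ⧸ J),
      -- well-definedness of `π(a)[b] = [a b]`
      (∀ a b : A, π a (Submodule.Quotient.mk b) = Submodule.Quotient.mk (a * b)) ∧
      -- each `π(a)` is `C`-linear
      (∀ (a : A) (x y : A ⧸ J), π a (x + y) = π a x + π a y) ∧
      (∀ (a : A) (c : Cx R) (x : A ⧸ J), π a (c • x) = c • π a x) ∧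
      -- `π` is a unital algebra homomorphism
      (∀ a b : A, ∀ x, π (a * b) x = π a (π b x)) ∧
      (∀ a b : A, ∀ x, π (a + b) x = π a x + π b x) ∧
      (∀ (c : Cx R) (a : A) (x), π (c • a) x = c • π a x) ∧
      (∀ x, π 1 x = x) ∧
      -- `π(a)` is adjointable with adjoint `π(a*)`, so `π` is a `*`-homomorphism
      (∀ (a : A) (x y : A ⧸ J), ip (π a x) y = ip x (π (star a) y)) := by
  classical
  refine ⟨GNSAux.gnsIdeal ω hω, GNSAux.mem_gnsIdeal ω hω,
    GNSAux.gnsIP ω hω, GNSAux.gnsIP_mk ω hω, ?_, ?_, ?_, ?_,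
    (fun a => (GNSAux.gnsRep ω hω a : _ → _)), GNSAux.gnsRep_mk ω hω,
    ?_, ?_, ?_, ?_, ?_, ?_, ?_⟩
  · intro x y z
    obtain ⟨a, rfl⟩ := Submodule.Quotient.mk_surjective _ x
    obtain ⟨b, rfl⟩ := Submodule.Quotient.mk_surjective _ y
    obtain ⟨c, rfl⟩ := Submodule.Quotient.mk_surjective _ z
    rw [← Submodule.Quotient.mk_add, GNSAux.gnsIP_mk, GNSAux.gnsIP_mk, GNSAux.gnsIP_mk,
      mul_add, map_add]
  · intro c x y
    obtain ⟨a, rfl⟩ := Submodule.Quotient.mk_surjective _ x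
    obtain ⟨b, rfl⟩ := Submodule.Quotient.mk_surjective _ y
    rw [← Submodule.Quotient.mk_smul, GNSAux.gnsIP_mk, GNSAux.gnsIP_mk,
      mul_smul_comm, map_smul, smul_eq_mul]
  · intro x y
    obtain ⟨a, rfl⟩ := Submodule.Quotient.mk_surjective _ x
    obtain ⟨b, rfl⟩ := Submodule.Quotient.mk_surjective _ y
    rw [GNSAux.gnsIP_mk, GNSAux.gnsIP_mk]
    exact GNSAux.herm ω hω a b
  · intro x hx
    obtain ⟨a, rfl⟩ := Submodule.Quotient.mk_surjective _ x
    have hna : ¬ ω (star a * a) = 0 := fun h =>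
      hx ((Submodule.Quotient.mk_eq_zero _).mpr ((GNSAux.mem_gnsIdeal ω hω a).mpr h))
    rw [GNSAux.gnsIP_mk]
    have hpos := hω a
    refine ⟨lt_of_le_of_ne hpos.1 (Ne.symm ?_), hpos.2⟩
    intro h
    apply hna
    ext
    · simpa using h
    · simpa using hpos.2
  · intro a x y
    exact map_add (GNSAux.gnsRep ω hω a) x y
  · intro a c x
    exact map_smul (GNSAux.gnsRep ω hω a) c x
  · intro a b x
    obtain ⟨c, rfl⟩ := Submodule.Quotient.mk_surjective _ x
    simp only [GNSAux.gnsRep_mk, mul_assoc]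
  · intro a b x
    obtain ⟨c, rfl⟩ := Submodule.Quotient.mk_surjective _ x
    simp only [GNSAux.gnsRep_mk, add_mul, Submodule.Quotient.mk_add]
  · intro c a x
    obtain ⟨b, rfl⟩ := Submodule.Quotient.mk_surjective _ x
    simp only [GNSAux.gnsRep_mk, smul_mul_assoc, Submodule.Quotient.mk_smul]
  · intro x
    obtain ⟨b, rfl⟩ := Submodule.Quotient.mk_surjective _ x
    simp only [GNSAux.gnsRep_mk, one_mul]
  · intro a x y
    obtain ⟨b, rfl⟩ := Submodule.Quotient.mk_surjective _ x
    obtain ⟨c, rfl⟩ := Submodule.Quotient.mk_surjective _ y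
    simp only [GNSAux.gnsRep_mk, GNSAux.gnsIP_mk, star_mul, mul_assoc]

end StarAlgebra
end

section
/- Let D be a *-algebra over C and H a right D-module. There is a bijection between D-valued inner products ⟨·,·⟩_D on H and (D,D)-bimodule maps Φ : H̄ ⊗_C H → D satisfying Φ(z)* = Φ(I(z)), given by ⟨x,y⟩_D = Φ(x̄ ⊗ y). Moreover, ⟨·,·⟩_D is completely positive if and only if Φ is completely positive. -/
open MulOpposite TensorProduct

section DModules

/- `D` is a `*`-algebra over `C = R(i)`; `H` is a right `D`-module (encoded as a
module over `Dᵐᵒᵖ`) with a compatible `C`-module structure. -/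
variable (R : Type*) [CommRing R] [LinearOrder R] [IsStrictOrderedRing R]
variable (D : Type*) [Ring D] [StarRing D] [Algebra (Cx R) D] [StarModule (Cx R) D]
variable (H : Type*) [AddCommGroup H] [Module (Cx R) H] [Module Dᵐᵒᵖ H]
  [SMulCommClass (Cx R) Dᵐᵒᵖ H]

/-- A `D`-valued inner product on the right `D`-module `H`: `C`-sesquilinear
(linear in the second argument), Hermitian, and right `D`-linear in the second
argument. -/
def IsDValuedIP (ip : H → H → D) : Prop :=
  (∀ x y z : H, ip x (y + z) = ip x y + ip x z) ∧
  (∀ (c : Cx R) (x y : H), ip x (c • y) = c • ip x y) ∧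
  (∀ x y : H, ip x y = star (ip y x)) ∧
  (∀ (d : D) (x y : H), ip x (op d • y) = ip x y * d)

/-- The complex conjugate module `H̄` of the right `D`-module `H`: the same
underlying abelian group with the twisted actions `c • x̄ = (x · conj c)‾` and
`d • x̄ = (x · d*)‾`, making it a left `D`-module. -/
def ConjMod (R D H : Type*) : Type _ := H

/-- The canonical identification `x ↦ x̄`, an additive `C`-antilinear bijection. -/
def toConj (R D H : Type*) : H → ConjMod R D H := id

/-- The inverse identification `x̄ ↦ x`. -/
def ofConj (R D H : Type*) : ConjMod R D H → H := id

instance : AddCommGroup (ConjMod R D H) := inferInstanceAs (AddCommGroup H)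

instance : Module (Cx R) (ConjMod R D H) where
  smul c x := toConj R D H (star c • ofConj R D H x)
  one_smul x := by
    show toConj R D H (star (1 : Cx R) • ofConj R D H x) = x
    rw [star_one, one_smul] <;> rfl
  mul_smul c c' x := by
    show toConj R D H (star (c * c') • ofConj R D H x) = _
    show _ = toConj R D H (star c • ofConj R D H (toConj R D H (star c' • ofConj R D H x)))
    rw [star_mul, mul_comm, mul_smul] <;> rfl
  smul_add c x y := by
    show toConj R D H (star c • (ofConj R D H x + ofConj R D H y)) = _
    rw [smul_add] <;> rfl
  smul_zero c := by
    show toConj R D H (star c • (0 : H)) = 0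
    rw [smul_zero] <;> rfl
  add_smul c c' x := by
    show toConj R D H (star (c + c') • ofConj R D H x) = _
    rw [star_add, add_smul] <;> rfl
  zero_smul x := by
    show toConj R D H (star (0 : Cx R) • ofConj R D H x) = 0
    rw [star_zero, zero_smul] <;> rfl

instance : Module D (ConjMod R D H) where
  smul d x := toConj R D H (op (star d) • ofConj R D H x)
  one_smul x := by
    show toConj R D H (op (star (1 : D)) • ofConj R D H x) = x
    rw [star_one, op_one, one_smul] <;> rfl
  mul_smul d d' x := by
    show toConj R D H (op (star (d * d')) • ofConj R D H x) = _
    show _ = toConj R D H (op (star d) • ofConj R D H (toConj R D H (op (star d') • ofConj R D H x)))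
    rw [star_mul, op_mul, mul_smul] <;> rfl
  smul_add d x y := by
    show toConj R D H (op (star d) • (ofConj R D H x + ofConj R D H y)) = _
    rw [smul_add] <;> rfl
  smul_zero d := by
    show toConj R D H (op (star d) • (0 : H)) = 0
    rw [smul_zero] <;> rfl
  add_smul d d' x := by
    show toConj R D H (op (star (d + d')) • ofConj R D H x) = _
    rw [star_add, op_add, add_smul] <;> rfl
  zero_smul x := by
    show toConj R D H (op (star (0 : D)) • ofConj R D H x) = 0
    rw [star_zero, op_zero, zero_smul] <;> rfl

instance : SMulCommClass (Cx R) D (ConjMod R D H) where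
  smul_comm c d x := by
    show toConj R D H (star c • ofConj R D H (toConj R D H (op (star d) • ofConj R D H x)))
      = toConj R D H (op (star d) • ofConj R D H (toConj R D H (star c • ofConj R D H x)))
    exact congrArg (toConj R D H) (smul_comm (star c) (op (star d)) (ofConj R D H x))

@[simp] lemma smul_conj_def (c : Cx R) (x : H) :
    c • toConj R D H x = toConj R D H (star c • x) := rfl

@[simp] lemma dsmul_conj_def (d : D) (x : H) :
    d • toConj R D H x = toConj R D H (op (star d) • x) := rfl

/-- `Mₙ(D)⁺`: the matrices on which every positive `C`-linear functional of the
`*`-algebra `Mₙ(D)` is nonnegative. -/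
def MatNonneg (R : Type*) [CommRing R] [LinearOrder R] [IsStrictOrderedRing R] (D : Type*) [Ring D]
    [StarRing D] [Algebra (Cx R) D] {n : ℕ} (M : Matrix (Fin n) (Fin n) D) : Prop :=
  ∀ Ω : Matrix (Fin n) (Fin n) D →ₗ[Cx R] Cx R,
    (∀ T : Matrix (Fin n) (Fin n) D, (Ω (star T * T)).nonneg) → (Ω M).nonneg

/-- Complete positivity of a `D`-valued inner product: all matrices
`(⟨xᵢ, xⱼ⟩)ᵢⱼ` lie in `Mₙ(D)⁺`. -/
def IsCompletelyPositiveIP (ip : H → H → D) : Prop :=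
  ∀ (n : ℕ) (x : Fin n → H),
    MatNonneg R D (Matrix.of fun i j => ip (x i) (x j))

/-- A Hermitian `(D,D)`-bimodule map `Φ : H̄ ⊗_C H → D`, i.e. `Φ(d·z·d') = d Φ(z) d'`
and `Φ(I z) = Φ(z)*` (expressed on pure tensors, which generate). -/
def IsHermitianBimoduleMap (Φ : ConjMod R D H ⊗[Cx R] H →ₗ[Cx R] D) : Prop :=
  (∀ (d : D) (x y : H),
    Φ ((d • toConj R D H x) ⊗ₜ[Cx R] y) = d * Φ (toConj R D H x ⊗ₜ[Cx R] y)) ∧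
  (∀ (d : D) (x y : H),
    Φ (toConj R D H x ⊗ₜ[Cx R] (op d • y)) = Φ (toConj R D H x ⊗ₜ[Cx R] y) * d) ∧
  (∀ x y : H, Φ (toConj R D H y ⊗ₜ[Cx R] x) = star (Φ (toConj R D H x ⊗ₜ[Cx R] y)))

/-- Complete positivity of `Φ`: `Φ`, applied entrywise, maps the wedge `Kₙ(E)`
generated by the matrices `(x̄ᵢ ⊗ xⱼ)ᵢⱼ` (and their convex combinations) into
`Mₙ(D)⁺`. -/
def IsCompletelyPositiveMap (Φ : ConjMod R D H ⊗[Cx R] H →ₗ[Cx R] D) : Prop :=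
  ∀ (n m : ℕ) (α : Fin m → R) (x : Fin m → Fin n → H), (∀ k, 0 < α k) →
    MatNonneg R D (Matrix.of fun i j =>
      Φ (∑ k, (Cx.ofR (α k) : Cx R) • (toConj R D H (x k i) ⊗ₜ[Cx R] x k j)))

section Helpers

variable {R : Type*} [CommRing R] [LinearOrder R] [IsStrictOrderedRing R]

lemma Cx.nonneg_zero : (0 : Cx R).nonneg := ⟨le_refl 0, rfl⟩

lemma Cx.nonneg_add {z w : Cx R} (hz : z.nonneg) (hw : w.nonneg) : (z + w).nonneg :=
  ⟨add_nonneg hz.1 hw.1, by simp [hz.2, hw.2]⟩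

lemma Cx.nonneg_ofR_mul {a : R} (ha : 0 ≤ a) {z : Cx R} (hz : z.nonneg) :
    ((Cx.ofR a : Cx R) * z).nonneg := by
  constructor
  · simp [Cx.ofR]
    exact mul_nonneg ha hz.1
  · simp [Cx.ofR, hz.2]

lemma Cx.nonneg_sum {ι : Type*} (s : Finset ι) (f : ι → Cx R)
    (h : ∀ i ∈ s, (f i).nonneg) : (∑ i ∈ s, f i).nonneg := by
  classical
  induction s using Finset.induction_on with
  | empty => simpa using Cx.nonneg_zero
  | insert a t hx ih =>
    rw [Finset.sum_insert hx]
    exact Cx.nonneg_add (h _ (Finset.mem_insert_self _ _))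
      (ih fun i hi => h i (Finset.mem_insert_of_mem hi))

end Helpers

section Lemmas

variable {R : Type*} [CommRing R] [LinearOrder R] [IsStrictOrderedRing R]
variable {D : Type*} [Ring D] [StarRing D] [Algebra (Cx R) D] [StarModule (Cx R) D]
variable {H : Type*} [AddCommGroup H] [Module (Cx R) H] [Module Dᵐᵒᵖ H]
  [SMulCommClass (Cx R) Dᵐᵒᵖ H]

/-- Additivity in the first variable of a `D`-valued inner product. -/
lemma ip_add_left {ip : H → H → D} (hip : IsDValuedIP R D H ip) (x y z : H) :
    ip (x + y) z = ip x z + ip y z := by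
  obtain ⟨hadd, _, hherm, _⟩ := hip
  rw [hherm, hadd, star_add, ← hherm, ← hherm]

/-- Conjugate-linearity in the first variable. -/
lemma ip_smul_left {ip : H → H → D} (hip : IsDValuedIP R D H ip) (c : Cx R) (x y : H) :
    ip (c • x) y = star c • ip x y := by
  obtain ⟨_, hsmul, hherm, _⟩ := hip
  rw [hherm, hsmul, star_smul, ← hherm]

lemma ip_dsmul_left {ip : H → H → D} (hip : IsDValuedIP R D H ip) (d : D) (x y : H) :
    ip (op d • x) y = star d * ip x y := by
  obtain ⟨_, _, hherm, hd⟩ := hip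
  rw [hherm, hd, star_mul, ← hherm]

/-- The bilinear map underlying `Φ`. -/
def ipBilin (ip : H → H → D) (hip : IsDValuedIP R D H ip) :
    ConjMod R D H →ₗ[Cx R] H →ₗ[Cx R] D where
  toFun x :=
    { toFun := fun y => ip (ofConj R D H x) y
      map_add' := fun y z => hip.1 _ y z
      map_smul' := fun c y => hip.2.1 c _ y }
  map_add' x y := by
    ext z
    exact ip_add_left hip _ _ z
  map_smul' c x := by
    ext z
    show ip (star c • ofConj R D H x) z = c • ip (ofConj R D H x) z
    rw [ip_smul_left hip, star_star]

end Lemmas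

/-- For a right `D`-module `H`, `D`-valued inner products on `H`
correspond bijectively to Hermitian `(D,D)`-bimodule maps `Φ : H̄ ⊗_C H → D`, via
`⟨x,y⟩_D = Φ(x̄ ⊗ y)`; moreover the inner product is completely positive iff the
corresponding `Φ` is completely positive. -/
theorem inner_products_correspond_to_hermitian_bimodule_maps :
    -- every `D`-valued inner product is induced by a unique linear map `Φ`,
    (∀ ip : H → H → D, IsDValuedIP R D H ip →
      ∃! Φ : ConjMod R D H ⊗[Cx R] H →ₗ[Cx R] D,
        ∀ x y : H, Φ (toConj R D H x ⊗ₜ[Cx R] y) = ip x y) ∧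
    -- and any such `Φ` is a Hermitian bimodule map
    (∀ (ip : H → H → D) (Φ : ConjMod R D H ⊗[Cx R] H →ₗ[Cx R] D),
      IsDValuedIP R D H ip → (∀ x y : H, Φ (toConj R D H x ⊗ₜ[Cx R] y) = ip x y) →
      IsHermitianBimoduleMap R D H Φ) ∧
    -- conversely every Hermitian bimodule map induces a `D`-valued inner product
    (∀ Φ : ConjMod R D H ⊗[Cx R] H →ₗ[Cx R] D, IsHermitianBimoduleMap R D H Φ →
      IsDValuedIP R D H (fun x y => Φ (toConj R D H x ⊗ₜ[Cx R] y))) ∧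
    -- and complete positivity corresponds to complete positivity
    (∀ (ip : H → H → D) (Φ : ConjMod R D H ⊗[Cx R] H →ₗ[Cx R] D),
      IsDValuedIP R D H ip → (∀ x y : H, Φ (toConj R D H x ⊗ₜ[Cx R] y) = ip x y) →
      (IsCompletelyPositiveIP R D H ip ↔ IsCompletelyPositiveMap R D H Φ)) := by
  have uniq : ∀ (Φ₁ Φ₂ : ConjMod R D H ⊗[Cx R] H →ₗ[Cx R] D),
      (∀ x y : H, Φ₁ (toConj R D H x ⊗ₜ[Cx R] y) = Φ₂ (toConj R D H x ⊗ₜ[Cx R] y)) →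
      Φ₁ = Φ₂ := by
    intro Φ₁ Φ₂ h
    apply LinearMap.ext
    intro z
    induction z using TensorProduct.induction_on with
    | zero => simp
    | tmul a b => exact h a b
    | add u v hu hv => simp [map_add, hu, hv]
  refine ⟨?_, ?_, ?_, ?_⟩
  · -- existence and uniqueness
    intro ip hip
    refine ⟨TensorProduct.lift (ipBilin ip hip), fun x y => rfl, ?_⟩
    intro Φ' h
    exact uniq Φ' _ (fun x y => (h x y).trans rfl)
  · -- Hermitian bimodule map
    intro ip Φ hip hΦ
    refine ⟨?_, ?_, ?_⟩
    · intro d x y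
      show Φ (toConj R D H (op (star d) • x) ⊗ₜ[Cx R] y) = _
      rw [hΦ, hΦ, ip_dsmul_left hip, star_star]
    · intro d x y
      rw [hΦ, hΦ, hip.2.2.2]
    · intro x y
      rw [hΦ, hΦ, hip.2.2.1]
  · -- converse
    intro Φ hΦ
    obtain ⟨h1, h2, h3⟩ := hΦ
    refine ⟨fun x y z => ?_, fun c x y => ?_, fun x y => h3 y x,
      fun d x y => h2 d x y⟩
    · show Φ (toConj R D H x ⊗ₜ[Cx R] (y + z)) = _
      rw [TensorProduct.tmul_add, map_add]
    · show Φ (toConj R D H x ⊗ₜ[Cx R] (c • y)) = _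
      rw [TensorProduct.tmul_smul, map_smul]
  · -- complete positivity
    intro ip Φ hip hΦ
    constructor
    · intro h n m α x hα Ω hΩ
      have key : (Matrix.of fun i j =>
          Φ (∑ k, (Cx.ofR (α k) : Cx R) • (toConj R D H (x k i) ⊗ₜ[Cx R] x k j)))
          = ∑ k, (Cx.ofR (α k) : Cx R) • (Matrix.of fun i j => ip (x k i) (x k j)) := by
        ext i j
        simp only [Matrix.of_apply, map_sum, map_smul, hΦ, Matrix.sum_apply,
          Matrix.smul_apply]
      rw [key, map_sum]
      refine Cx.nonneg_sum _ _ fun k _ => ?_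
      rw [map_smul]
      have := h n (x k) Ω hΩ
      simpa [smul_eq_mul] using Cx.nonneg_ofR_mul (le_of_lt (hα k)) this
    · intro h n x
      have := h n 1 (fun _ => 1) (fun _ => x) (fun _ => one_pos)
      have key : (Matrix.of fun i j =>
          Φ (∑ _k : Fin 1, (Cx.ofR (1 : R) : Cx R) • (toConj R D H (x i) ⊗ₜ[Cx R] x j)))
          = Matrix.of fun i j => ip (x i) (x j) := by
        ext i j
        simp [map_one, hΦ]
      rwa [key] at this
end DModules
end
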